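/- Let N be a positive integer and B ⊆ ℤ/Nℤ a nonempty set. Let ε, δ be real numbers with 0 < ε < 1 and 0 < δ < 1/2, and suppose |B̂(1)| ≥ (1 − 8εδ²)|B|, where B̂(r) = Σ_{b∈B} e^(2πi b r / N). Then there exist a ∈ ℤ/Nℤ and an integer l < δN such that |B \ {a, a+1, …, a+l}| < ε|B|. -/

import Mathlib

open Pointwise Complex

/-- Auxiliary comparison function for Lev's lemma: normalized `1 - cos`. -/
noncomputable def levQ (δ y : ℝ) : ℝ :=
  (1 - Real.cos (2 * Real.pi * y)) / (2 * (1 - Real.cos (Real.pi * δ)))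

/-- Auxiliary cumulative weight function for Lev's lemma. -/
noncomputable def levH (δ e : ℝ) : ℝ :=
  if 0 ≤ e then 1 else if e ≤ -δ then 0 else min 1 (levQ δ (e + δ))

lemma levc0_pos {δ : ℝ} (hδ : 0 < δ) (hδ1 : δ < 1/2) :
    0 < 2 * (1 - Real.cos (Real.pi * δ)) := by
  have hπ := Real.pi_pos
  have h1 : Real.cos (Real.pi * δ) < Real.cos 0 :=
    Real.cos_lt_cos_of_nonneg_of_le_pi le_rfl (by nlinarith) (by nlinarith)
  rw [Real.cos_zero] at h1
  linarith

lemma levc0_gt {δ : ℝ} (hδ : 0 < δ) (hδ1 : δ < 1/2) :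
    8 * δ^2 < 2 * (1 - Real.cos (Real.pi * δ)) := by
  have hπ := Real.pi_pos
  have hs : Real.sqrt 2 * δ < Real.sin (Real.pi * δ / 2) := by
    have h1pos : (0:ℝ) < 1 - 2*δ := by linarith
    have h2pos : (0:ℝ) < 2*δ := by linarith
    have hsum1 : (1 - 2*δ) + 2*δ = 1 := by ring
    have h := strictConcaveOn_sin_Icc.2
      (Set.mem_Icc.2 ⟨le_rfl, hπ.le⟩)
      (Set.mem_Icc.2 ⟨by positivity, by linarith⟩)
      ((by positivity : (0:ℝ) < Real.pi/4).ne)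
      h1pos h2pos hsum1
    simp only [smul_eq_mul, Real.sin_zero, Real.sin_pi_div_four, mul_zero] at h
    have harg : 0 + 2*δ * (Real.pi/4) = Real.pi * δ / 2 := by ring
    rw [harg] at h
    calc Real.sqrt 2 * δ = 0 + 2*δ * (Real.sqrt 2 / 2) := by ring
      _ < _ := h
  have hcos : Real.cos (Real.pi * δ) = 1 - 2 * Real.sin (Real.pi * δ / 2)^2 := by
    have h2 : Real.cos (2 * (Real.pi * δ / 2)) = 2 * Real.cos (Real.pi*δ/2)^2 - 1 :=
      Real.cos_two_mul _
    rw [Real.cos_sq'] at h2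
    have e : 2 * (Real.pi * δ / 2) = Real.pi * δ := by ring
    rw [e] at h2
    linarith
  have h0 : 0 ≤ Real.sqrt 2 * δ := by positivity
  have hsq : (Real.sqrt 2 * δ)^2 = 2 * δ^2 := by
    rw [mul_pow, Real.sq_sqrt (by norm_num : (0:ℝ) ≤ 2)]
  nlinarith [hs, h0]

lemma levQ_nonneg {δ : ℝ} (hδ : 0 < δ) (hδ1 : δ < 1/2) (y : ℝ) : 0 ≤ levQ δ y :=
  div_nonneg (by linarith [Real.cos_le_one (2 * Real.pi * y)]) (levc0_pos hδ hδ1).le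

lemma levQ_even (δ y : ℝ) : levQ δ (-y) = levQ δ y := by
  simp [levQ, mul_neg, Real.cos_neg]

lemma levQ_one_le {δ : ℝ} (hδ : 0 < δ) (hδ1 : δ < 1/2) {y : ℝ}
    (h1 : δ ≤ y) (h2 : y ≤ 1/2) : 1 ≤ levQ δ y := by
  have hπ := Real.pi_pos
  have hc0 := levc0_pos hδ hδ1
  rw [levQ, le_div_iff₀ hc0, one_mul]
  have hc1 : Real.cos (2*Real.pi*y) ≤ Real.cos (2*Real.pi*δ) :=
    Real.cos_le_cos_of_nonneg_of_le_pi (by positivity) (by nlinarith) (by nlinarith)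
  have hc2 : Real.cos (2*Real.pi*δ) = 2 * Real.cos (Real.pi*δ)^2 - 1 := by
    have := Real.cos_two_mul (Real.pi * δ)
    have e : 2 * (Real.pi * δ) = 2 * Real.pi * δ := by ring
    rw [e] at this
    exact this
  have hc3 : 0 ≤ Real.cos (Real.pi*δ) :=
    Real.cos_nonneg_of_mem_Icc (Set.mem_Icc.2 ⟨by nlinarith, by nlinarith⟩)
  have hc4 : Real.cos (Real.pi*δ) ≤ 1 := Real.cos_le_one _
  nlinarith

lemma levQ_add {δ : ℝ} (hδ : 0 < δ) (hδ1 : δ < 1/2) {x : ℝ}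
    (h1 : 0 ≤ x) (h2 : x ≤ δ) : 1 ≤ levQ δ x + levQ δ (δ - x) := by
  have hπ := Real.pi_pos
  have hc0 := levc0_pos hδ hδ1
  rw [levQ, levQ, ← add_div, le_div_iff₀ hc0, one_mul]
  have hsum : Real.cos (2*Real.pi*x) + Real.cos (2*Real.pi*(δ-x))
      = 2 * Real.cos (Real.pi*δ) * Real.cos (Real.pi*(2*x-δ)) := by
    rw [Real.cos_add_cos]
    have e1 : (2*Real.pi*x + 2*Real.pi*(δ-x))/2 = Real.pi * δ := by ring
    have e2 : (2*Real.pi*x - 2*Real.pi*(δ-x))/2 = Real.pi*(2*x-δ) := by ring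
    rw [e1, e2]
  have hc3 : 0 ≤ Real.cos (Real.pi*δ) :=
    Real.cos_nonneg_of_mem_Icc (Set.mem_Icc.2 ⟨by nlinarith, by nlinarith⟩)
  have hc4 : Real.cos (Real.pi*(2*x-δ)) ≤ 1 := Real.cos_le_one _
  nlinarith

lemma levH_nonneg {δ : ℝ} (hδ : 0 < δ) (hδ1 : δ < 1/2) (e : ℝ) : 0 ≤ levH δ e := by
  unfold levH
  split
  · norm_num
  · split
    · exact le_rfl
    · exact le_min (by norm_num) (levQ_nonneg hδ hδ1 _)

lemma levH_le_one {δ : ℝ} (hδ : 0 < δ) (hδ1 : δ < 1/2) (e : ℝ) : levH δ e ≤ 1 := by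
  unfold levH
  split
  · exact le_rfl
  · split
    · norm_num
    · exact min_le_left _ _

lemma levH_of_nonneg {δ e : ℝ} (h : 0 ≤ e) : levH δ e = 1 := by
  rw [levH, if_pos h]

lemma levH_of_le {δ e : ℝ} (h0 : ¬ 0 ≤ e) (h : e ≤ -δ) : levH δ e = 0 := by
  rw [levH, if_neg h0, if_pos h]

lemma levH_mono {δ : ℝ} (hδ : 0 < δ) (hδ1 : δ < 1/2) : Monotone (levH δ) := by
  intro u v huv
  have hπ := Real.pi_pos
  by_cases hv : 0 ≤ v
  · rw [levH_of_nonneg hv]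
    exact levH_le_one hδ hδ1 u
  · have hu : ¬ 0 ≤ u := fun h => hv (h.trans huv)
    by_cases hu2 : u ≤ -δ
    · rw [levH_of_le hu hu2]
      exact levH_nonneg hδ hδ1 v
    · have hv2 : ¬ v ≤ -δ := fun h => hu2 (huv.trans h)
      push_neg at hv hu hu2 hv2
      rw [levH, if_neg (not_le.2 hu), if_neg (not_le.2 hu2),
        levH, if_neg (not_le.2 hv), if_neg (not_le.2 hv2)]
      refine min_le_min le_rfl ?_
      unfold levQ
      have hcos : Real.cos (2*Real.pi*(v+δ)) ≤ Real.cos (2*Real.pi*(u+δ)) :=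
        Real.cos_le_cos_of_nonneg_of_le_pi (by nlinarith) (by nlinarith) (by nlinarith)
      have hc0 := levc0_pos hδ hδ1
      exact (div_le_div_iff_of_pos_right hc0).mpr (by linarith)

lemma levH_main {δ : ℝ} (hδ : 0 < δ) (hδ1 : δ < 1/2) {y : ℝ}
    (h1 : -(1/2:ℝ) < y) (h2 : y ≤ 1/2) :
    (1 - levH δ y) + levH δ (y - δ) ≤ levQ δ y := by
  by_cases hy0 : 0 ≤ y
  · rw [levH_of_nonneg hy0]
    by_cases hyd : δ ≤ y
    · have ha := levH_le_one hδ hδ1 (y - δ)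
      have hb := levQ_one_le hδ hδ1 hyd h2
      linarith
    · push_neg at hyd
      by_cases hyd2 : y - δ ≤ -δ
      · rw [levH_of_le (by linarith) hyd2]
        have := levQ_nonneg hδ hδ1 y
        linarith
      · have hH : levH δ (y-δ) = min 1 (levQ δ (y - δ + δ)) := by
          rw [levH, if_neg (by push_neg; linarith), if_neg hyd2]
        rw [hH]
        have he : y - δ + δ = y := by ring
        rw [he]
        have := min_le_right 1 (levQ δ y)
        linarith
  · push_neg at hy0
    rw [levH_of_le (by push_neg; linarith) (by linarith : y - δ ≤ -δ)]
    by_cases hyd : y ≤ -δ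
    · rw [levH_of_le (by push_neg; linarith) hyd]
      have hq : 1 ≤ levQ δ (-y) := levQ_one_le hδ hδ1 (by linarith) (by linarith)
      rw [levQ_even] at hq
      linarith
    · push_neg at hyd
      have hH : levH δ y = min 1 (levQ δ (y + δ)) := by
        rw [levH, if_neg (by push_neg; linarith), if_neg (by push_neg; linarith)]
      rw [hH]
      have hkey := levQ_add hδ hδ1 (x := -y) (by linarith) (by linarith)
      rw [levQ_even] at hkey
      have he : δ - -y = y + δ := by ring
      rw [he] at hkey
      rcases le_total 1 (levQ δ (y+δ)) with hm | hm
      · rw [min_eq_left hm]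
        have := levQ_nonneg hδ hδ1 y
        linarith
      · rw [min_eq_right hm]
        linarith

set_option maxHeartbeats 1000000 in
/-- **Lemma 8'** (Lev, weak form). Let `N` be a positive integer and `B ⊆ ℤ/Nℤ` nonempty. Let
`0 < ε < 1` and `0 < δ < 1/2` be reals with
`|B̂(1)| ≥ (1 − 8εδ²)|B|`, where `B̂(r) = ∑_{b ∈ B} e(br/N)`. Then there
are `a ∈ ℤ/Nℤ` and an integer `l < δN` with `|B \ {a, a+1, …, a+l}| < ε|B|`. -/
theorem lev_large_fourier_coefficient' {N : ℕ} (hN : 0 < N)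
    (B : Finset (ZMod N)) (hB : B.Nonempty) (ε δ : ℝ)
    (hε : 0 < ε) (hε1 : ε < 1) (hδ : 0 < δ) (hδ1 : δ < 1 / 2)
    (hfourier :
      (1 - 8 * ε * δ ^ 2) * B.card ≤
        ‖∑ b ∈ B,
          Complex.exp (2 * Real.pi * Complex.I * ((b * 1 : ZMod N).val : ℂ) / N)‖) :
    ∃ (a : ZMod N) (l : ℕ), (l : ℝ) < δ * N ∧
      ((B \ ((Finset.range (l + 1)).image (fun i : ℕ => a + (i : ZMod N)))).card : ℝ)
        < ε * B.card := by
  classical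
  haveI : NeZero N := ⟨hN.ne'⟩
  have hπ := Real.pi_pos
  have hNR : (0:ℝ) < N := by exact_mod_cast hN
  set S : ℂ := ∑ b ∈ B, Complex.exp (2 * Real.pi * Complex.I * ((b * 1 : ZMod N).val : ℂ) / N)
    with hSdef
  have hS' : S = ∑ b ∈ B, Complex.exp (2 * Real.pi * Complex.I * ((b.val : ℕ) : ℂ) / N) := by
    rw [hSdef]; simp only [mul_one]
  set φ : ℝ := Complex.arg S / (2 * Real.pi) with hφdef
  -- cosine form of the hypothesis
  have hcos : (1 - 8*ε*δ^2) * B.card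
      ≤ ∑ b ∈ B, Real.cos (2*Real.pi*((b.val:ℝ)/N - φ)) := by
    refine le_trans hfourier ?_
    set θ : ℝ := Complex.arg S with hθdef
    have h1 : S * Complex.exp (-(θ:ℂ) * Complex.I) = ((‖S‖ : ℝ) : ℂ) := by
      calc S * Complex.exp (-(θ:ℂ) * Complex.I)
          = (‖S‖ : ℂ) * Complex.exp ((θ:ℂ) * Complex.I)
              * Complex.exp (-(θ:ℂ) * Complex.I) := by
            rw [hθdef, Complex.norm_mul_exp_arg_mul_I S]
        _ = (‖S‖ : ℂ) * Complex.exp ((θ:ℂ) * Complex.I + -(θ:ℂ) * Complex.I) := by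
            rw [mul_assoc, ← Complex.exp_add]
        _ = (‖S‖ : ℂ) := by
            rw [show (θ:ℂ) * Complex.I + -(θ:ℂ) * Complex.I = 0 by ring,
              Complex.exp_zero, mul_one]
    have h2 : (‖S‖ : ℝ) = (S * Complex.exp (-(θ:ℂ) * Complex.I)).re := by
      rw [h1, Complex.ofReal_re]
    rw [h2, hS', Finset.sum_mul, Complex.re_sum]
    apply le_of_eq
    refine Finset.sum_congr rfl fun b _ => ?_
    rw [← Complex.exp_add]
    have hθφ : θ = 2 * Real.pi * φ := by
      rw [hφdef]; field_simp
    have hN0 : (N:ℂ) ≠ 0 := by exact_mod_cast hN.ne'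
    have harg : 2 * (Real.pi:ℂ) * Complex.I * ((b.val : ℕ) : ℂ) / (N:ℂ) + -(θ:ℂ) * Complex.I
        = ((2*Real.pi*((b.val:ℝ)/N - φ) : ℝ) : ℂ) * Complex.I := by
      rw [hθφ]
      push_cast
      field_simp
      ring
    rw [harg, Complex.exp_ofReal_mul_I_re]
  -- basic data
  set m₁ : ℤ := ⌈(N:ℝ) * φ⌉ with hm₁def
  set η : ℝ := (m₁:ℝ) - N * φ with hηdef
  have hη0 : 0 ≤ η := by
    have := Int.le_ceil ((N:ℝ) * φ); rw [hηdef]; linarith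
  have hη1 : η < 1 := by
    have := Int.ceil_lt_add_one ((N:ℝ) * φ); rw [hηdef]; linarith
  set L : ℕ := ⌈δ * (N:ℝ)⌉₊ with hLdef
  have hL1 : 1 ≤ L := Nat.one_le_ceil_iff.2 (by positivity)
  have hLge : δ * N ≤ (L:ℝ) := Nat.le_ceil _
  have hLlt : (L:ℝ) < δ * N + 1 := Nat.ceil_lt_add_one (by positivity)
  set ee : ℕ → ℝ := fun k => (η - k)/N with heedef
  set w : ℕ → ℝ := fun k => levH δ (ee k) - levH δ (ee (k+1)) with hwdef
  have heemono : ∀ j k : ℕ, j ≤ k → ee k ≤ ee j := by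
    intro j k hjk
    simp only [heedef]
    have hjk' : (j:ℝ) ≤ (k:ℝ) := by exact_mod_cast hjk
    exact (div_le_div_iff_of_pos_right hNR).mpr (by linarith)
  have hw0 : ∀ k, 0 ≤ w k := by
    intro k
    simp only [hwdef]
    exact sub_nonneg.2 (levH_mono hδ hδ1 (heemono k (k+1) (Nat.le_succ k)))
  have hee0 : levH δ (ee 0) = 1 := by
    apply levH_of_nonneg
    simp only [heedef]
    push_cast
    exact div_nonneg (by linarith) hNR.le
  have heeL1 : levH δ (ee (L+1)) = 0 := by
    apply levH_of_le
    · simp only [heedef]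
      push_neg
      apply div_neg_of_neg_of_pos ?_ hNR
      push_cast
      linarith
    · simp only [heedef]
      rw [div_le_iff₀ hNR]
      push_cast
      linarith
  have hsumw : ∑ k ∈ Finset.range (L+1), w k = 1 := by
    simp only [hwdef]
    rw [Finset.sum_range_sub' (fun k => levH δ (ee k))]
    rw [hee0, heeL1]
    norm_num
  -- intervals
  set II : ℕ → Finset (ZMod N) :=
    fun k => (Finset.range L).image (fun i : ℕ => (((m₁ - (k:ℤ)) : ℤ) : ZMod N) + (i : ZMod N))
    with hIIdef
  -- per-element position data
  set tt : ZMod N → ℤ := fun b => ⌊((N:ℝ)/2 - η + (m₁:ℝ) - (b.val:ℝ))/N⌋ with httdef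
  set dd : ZMod N → ℤ := fun b => m₁ - (b.val:ℤ) - N * tt b with hdddef
  set yy : ZMod N → ℝ := fun b => (η - dd b)/N with hyydef
  have hy_eq : ∀ b : ZMod N, yy b = (b.val:ℝ)/N - φ + tt b := by
    intro b
    simp only [hyydef, hdddef, hηdef]
    push_cast
    field_simp
    ring
  have hy_ub : ∀ b : ZMod N, yy b ≤ 1/2 := by
    intro b
    have h1 : (tt b : ℝ) ≤ ((N:ℝ)/2 - η + (m₁:ℝ) - (b.val:ℝ))/N := by
      simp only [httdef]; exact Int.floor_le _
    rw [le_div_iff₀ hNR] at h1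
    simp only [hyydef, hdddef]
    rw [div_le_iff₀ hNR]
    push_cast
    push_cast at h1
    linarith
  have hy_lb : ∀ b : ZMod N, -(1/2:ℝ) < yy b := by
    intro b
    have h1 : ((N:ℝ)/2 - η + (m₁:ℝ) - (b.val:ℝ))/N < (tt b : ℝ) + 1 := by
      simp only [httdef]; exact Int.lt_floor_add_one _
    rw [div_lt_iff₀ hNR] at h1
    simp only [hyydef, hdddef]
    rw [lt_div_iff₀ hNR]
    push_cast
    push_cast at h1
    linarith
  have hval : ∀ b : ZMod N, ((b.val : ℕ) : ZMod N) = b := fun b => ZMod.natCast_rightInverse b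
  have hcover : ∀ b : ZMod N, ∀ k : ℕ, dd b ≤ (k:ℤ) → (k:ℤ) ≤ dd b + ((L:ℤ) - 1) → b ∈ II k := by
    intro b k h1 h2
    simp only [hIIdef]
    refine Finset.mem_image.2 ⟨((k:ℤ) - dd b).toNat, Finset.mem_range.2 (by omega), ?_⟩
    have h4 : ((((k:ℤ) - dd b).toNat : ℕ) : ℤ) = (k:ℤ) - dd b := Int.toNat_of_nonneg (by omega)
    have h5 : ((((k:ℤ) - dd b).toNat : ℕ) : ZMod N) = (((k:ℤ) - dd b : ℤ) : ZMod N) := by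
      have h5' := congrArg (fun z : ℤ => (z : ZMod N)) h4
      simp only [Int.cast_natCast] at h5'
      exact h5'
    rw [h5]
    have h6 : (((m₁ - (k:ℤ)) : ℤ) : ZMod N) + (((k:ℤ) - dd b : ℤ) : ZMod N)
        = ((m₁ - dd b : ℤ) : ZMod N) := by
      rw [← Int.cast_add]
      congr 1
      ring
    rw [h6]
    have h7 : m₁ - dd b = (b.val:ℤ) + N * tt b := by simp only [hdddef]; ring
    rw [h7]
    push_cast
    rw [ZMod.natCast_self, zero_mul, add_zero, hval b]
  -- the per-element weight bound
  have hQy : ∀ b ∈ B,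
      ∑ k ∈ Finset.range (L+1), w k * (if b ∈ II k then (0:ℝ) else 1) ≤ levQ δ (yy b) := by
    intro b hb
    have hylb := hy_lb b
    have hyub := hy_ub b
    have hle1 : ∑ k ∈ Finset.range (L+1), w k * (if b ∈ II k then (0:ℝ) else 1) ≤ 1 := by
      calc ∑ k ∈ Finset.range (L+1), w k * (if b ∈ II k then (0:ℝ) else 1)
          ≤ ∑ k ∈ Finset.range (L+1), w k := by
            refine Finset.sum_le_sum fun k _ => ?_
            by_cases h : b ∈ II k
            · simp only [if_pos h, mul_zero]; exact hw0 k
            · simp only [if_neg h, mul_one, le_refl]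
        _ = 1 := hsumw
    by_cases hA : (L:ℤ) < dd b
    · refine hle1.trans ?_
      have hyd : yy b ≤ -δ := by
        simp only [hyydef]
        rw [div_le_iff₀ hNR]
        have hd : (L:ℝ) + 1 ≤ (dd b:ℝ) := by exact_mod_cast (by omega : (L:ℤ)+1 ≤ dd b)
        linarith
      have h1 : 1 ≤ levQ δ (-(yy b)) := levQ_one_le hδ hδ1 (by linarith) (by linarith)
      rw [levQ_even] at h1
      exact h1
    · by_cases hB2 : dd b + ((L:ℤ) - 1) < 0
      · refine hle1.trans ?_
        have hyd : δ ≤ yy b := by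
          simp only [hyydef]
          rw [le_div_iff₀ hNR]
          have hd : (dd b:ℝ) ≤ -(L:ℝ) := by exact_mod_cast (by omega : dd b ≤ -(L:ℤ))
          linarith
        exact levQ_one_le hδ hδ1 hyd hyub
      · push_neg at hA hB2
        set k₁ : ℕ := (dd b).toNat with hk₁def
        set k₂ : ℕ := min L ((dd b + ((L:ℤ)-1)).toNat) with hk₂def
        have hk₁k₂ : k₁ ≤ k₂ + 1 := by omega
        have step1 : ∑ k ∈ Finset.range (L+1), w k * (if b ∈ II k then (0:ℝ) else 1)
            ≤ ∑ k ∈ Finset.range (L+1), (w k - (if k₁ ≤ k ∧ k ≤ k₂ then w k else 0)) := by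
          refine Finset.sum_le_sum fun k hk => ?_
          by_cases hc : k₁ ≤ k ∧ k ≤ k₂
          · rw [if_pos hc]
            have hmem : b ∈ II k := hcover b k (by omega) (by omega)
            rw [if_pos hmem]
            simp
          · rw [if_neg hc]
            by_cases h : b ∈ II k
            · rw [if_pos h, mul_zero, sub_zero]; exact hw0 k
            · rw [if_neg h, mul_one, sub_zero]
        have step2 : ∑ k ∈ Finset.range (L+1), (w k - (if k₁ ≤ k ∧ k ≤ k₂ then w k else 0))
            = 1 - ∑ k ∈ Finset.Ico k₁ (k₂+1), w k := by
          rw [Finset.sum_sub_distrib, hsumw]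
          congr 1
          rw [← Finset.sum_filter]
          congr 1
          ext k
          simp only [Finset.mem_filter, Finset.mem_range, Finset.mem_Ico]
          omega
        have hIco : ∑ k ∈ Finset.Ico k₁ (k₂+1), w k
            = levH δ (ee k₁) - levH δ (ee (k₂+1)) := by
          rw [Finset.sum_Ico_eq_sub _ hk₁k₂]
          simp only [hwdef]
          rw [Finset.sum_range_sub' (fun k => levH δ (ee k)),
            Finset.sum_range_sub' (fun k => levH δ (ee k))]
          ring
        have hb1 : levH δ (yy b) ≤ levH δ (ee k₁) := by
          by_cases hd0 : dd b ≤ 0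
          · have hk0 : k₁ = 0 := by omega
            rw [hk0, hee0]
            exact levH_le_one hδ hδ1 _
          · have he : ee k₁ = yy b := by
              simp only [heedef, hyydef]
              congr 1
              have hk1z : (k₁:ℤ) = dd b := by omega
              have : ((k₁:ℕ):ℝ) = (dd b : ℝ) := by exact_mod_cast hk1z
              rw [this]
            rw [he]
        have hb2 : levH δ (ee (k₂+1)) ≤ levH δ (yy b - δ) := by
          by_cases hdL : (L:ℤ) ≤ dd b + ((L:ℤ)-1)
          · have hk2L : k₂ = L := by omega
            rw [hk2L, heeL1]
            exact levH_nonneg hδ hδ1 _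
          · have hk₂e : (k₂:ℤ) = dd b + ((L:ℤ)-1) := by omega
            apply levH_mono hδ hδ1
            have hk₂cast : ((k₂:ℕ):ℝ) = (dd b:ℝ) + (L:ℝ) - 1 := by
              have := congrArg (Int.cast : ℤ → ℝ) hk₂e
              push_cast at this
              linarith [this]
            simp only [heedef, hyydef]
            have hδL : δ ≤ (L:ℝ)/N := by rw [le_div_iff₀ hNR]; linarith
            have hid : (η - ((dd b:ℝ) + (L:ℝ)))/N = (η - (dd b:ℝ))/N - (L:ℝ)/N := by ring
            have harg : (η - ((k₂:ℕ)+1:ℕ))/N = (η - ((dd b:ℝ) + (L:ℝ)))/N := by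
              push_cast
              rw [hk₂cast]
              ring_nf
            rw [harg, hid]
            linarith
        have hm := levH_main hδ hδ1 hylb hyub
        calc ∑ k ∈ Finset.range (L+1), w k * (if b ∈ II k then (0:ℝ) else 1)
            ≤ ∑ k ∈ Finset.range (L+1), (w k - (if k₁ ≤ k ∧ k ≤ k₂ then w k else 0)) := step1
          _ = 1 - ∑ k ∈ Finset.Ico k₁ (k₂+1), w k := step2
          _ = 1 - (levH δ (ee k₁) - levH δ (ee (k₂+1))) := by rw [hIco]
          _ ≤ (1 - levH δ (yy b)) + levH δ (yy b - δ) := by linarith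
          _ ≤ levQ δ (yy b) := hm
  -- summing over b
  have hcard0 : (0:ℝ) < B.card := by exact_mod_cast hB.card_pos
  have hc0pos := levc0_pos hδ hδ1
  have htotal : ∑ k ∈ Finset.range (L+1), w k * ((B \ II k).card : ℝ) < ε * B.card := by
    have e1 : ∀ k : ℕ, ((B \ II k).card : ℝ) = ∑ b ∈ B, (if b ∈ II k then (0:ℝ) else 1) := by
      intro k
      rw [Finset.sdiff_eq_filter, Finset.card_filter]
      push_cast
      refine Finset.sum_congr rfl fun b _ => ?_
      by_cases h : b ∈ II k <;> simp [h]
    calc ∑ k ∈ Finset.range (L+1), w k * ((B \ II k).card : ℝ)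
        = ∑ b ∈ B, ∑ k ∈ Finset.range (L+1), w k * (if b ∈ II k then (0:ℝ) else 1) := by
          simp_rw [e1, Finset.mul_sum]
          rw [Finset.sum_comm]
      _ ≤ ∑ b ∈ B, levQ δ (yy b) := Finset.sum_le_sum hQy
      _ = (∑ b ∈ B, (1 - Real.cos (2*Real.pi*((b.val:ℝ)/N - φ))))
            / (2*(1 - Real.cos (Real.pi*δ))) := by
          rw [Finset.sum_div]
          refine Finset.sum_congr rfl fun b _ => ?_
          unfold levQ
          congr 2
          rw [hy_eq b]
          have harg2 : 2*Real.pi*((b.val:ℝ)/N - φ + (tt b:ℝ))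
              = 2*Real.pi*((b.val:ℝ)/N - φ) + (tt b) * (2*Real.pi) := by ring
          rw [harg2, Real.cos_add_int_mul_two_pi]
      _ ≤ (8*ε*δ^2 * B.card) / (2*(1 - Real.cos (Real.pi*δ))) := by
          have hnum : ∑ b ∈ B, (1 - Real.cos (2*Real.pi*((b.val:ℝ)/N - φ)))
              ≤ 8*ε*δ^2 * B.card := by
            rw [Finset.sum_sub_distrib, Finset.sum_const, nsmul_eq_mul, mul_one]
            nlinarith [hcos]
          exact (div_le_div_iff_of_pos_right hc0pos).mpr hnum
      _ < ε * B.card := by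
          rw [div_lt_iff₀ hc0pos]
          have hgt := levc0_gt hδ hδ1
          have hmul := mul_lt_mul_of_pos_left hgt (mul_pos hε hcard0)
          linarith [hmul]
  obtain ⟨k, hkmem, hklt⟩ : ∃ k ∈ Finset.range (L+1), ((B \ II k).card : ℝ) < ε * B.card := by
    by_contra hcon
    push_neg at hcon
    have hge : ε * B.card ≤ ∑ k ∈ Finset.range (L+1), w k * ((B \ II k).card : ℝ) := by
      have h1 : ε * B.card = ∑ k ∈ Finset.range (L+1), w k * (ε * B.card) := by
        rw [← Finset.sum_mul, hsumw, one_mul]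
      rw [h1]
      exact Finset.sum_le_sum fun k hk => mul_le_mul_of_nonneg_left (hcon k hk) (hw0 k)
    linarith
  refine ⟨(((m₁ - (k:ℤ)) : ℤ) : ZMod N), L - 1, ?_, ?_⟩
  · rw [Nat.cast_sub hL1]
    push_cast
    linarith
  · have hrw : L - 1 + 1 = L := Nat.sub_add_cancel hL1
    rw [hrw]
    simp only [hIIdef] at hklt
    exact hklt
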